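/- arXiv:2603.14758 — 2 statements merged into one kernel-verified Lean document; each statement's English description precedes it below -/
import Mathlib

section
/- Suppose the leisure choices of a married couple satisfy the first-order conditions (1-λ)·α_l·l_m^(-γ_l) = η·w_m and λ·α_l·l_f^(-γ_l) = η·w_f with η > 0, α_l > 0, γ_l > 0, l_m, l_f > 0, w_m, w_f > 0, where λ = 1/(1 + exp(ρ₀ + ρ₁(log w_m - log w_f) + ρ₂·𝟙{N₀>0})). Then log l_m - log l_f = ρ₀/γ_l + ((ρ₁-1)/γ_l)·(log w_m - log w_f) + (ρ₂/γ_l)·𝟙{N₀>0}. -/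
/-- Intra-household leisure gap from the couple's first-order conditions with
logistic bargaining weight. -/
theorem stmt_1 (ρ0 ρ1 ρ2 γl αl η wm wf lm lf lam : ℝ) (N0 : ℕ)
    (hη : 0 < η) (hα : 0 < αl) (hγ : 0 < γl)
    (hlm : 0 < lm) (hlf : 0 < lf) (hwm : 0 < wm) (hwf : 0 < wf)
    (hlam : lam = 1 / (1 + Real.exp (ρ0 + ρ1 * (Real.log wm - Real.log wf)
      + ρ2 * (if 0 < N0 then 1 else 0))))
    (foc_m : (1 - lam) * αl * lm ^ (-γl) = η * wm)
    (foc_f : lam * αl * lf ^ (-γl) = η * wf) :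
    Real.log lm - Real.log lf =
      ρ0 / γl + ((ρ1 - 1) / γl) * (Real.log wm - Real.log wf)
        + (ρ2 / γl) * (if 0 < N0 then 1 else 0) := by
  set ι : ℝ := (if 0 < N0 then (1:ℝ) else 0) with hι
  set X : ℝ := ρ0 + ρ1 * (Real.log wm - Real.log wf) + ρ2 * ι with hX
  have hE : (0:ℝ) < Real.exp X := Real.exp_pos X
  have hden : (0:ℝ) < 1 + Real.exp X := by linarith
  have hlampos : 0 < lam := by rw [hlam]; positivity
  have h1lam : 1 - lam = Real.exp X / (1 + Real.exp X) := by
    rw [hlam]; field_simp; ring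
  have h1lampos : 0 < 1 - lam := by rw [h1lam]; positivity
  have hloglam : Real.log lam = -Real.log (1 + Real.exp X) := by
    rw [hlam, one_div, Real.log_inv]
  have hlog1lam : Real.log (1 - lam) = X - Real.log (1 + Real.exp X) := by
    rw [h1lam, Real.log_div hE.ne' hden.ne', Real.log_exp]
  have hm := congrArg Real.log foc_m
  have hf := congrArg Real.log foc_f
  rw [Real.log_mul (by positivity) (by positivity),
      Real.log_mul h1lampos.ne' hα.ne', Real.log_rpow hlm,
      Real.log_mul hη.ne' hwm.ne'] at hm
  rw [Real.log_mul (by positivity) (by positivity),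
      Real.log_mul hlampos.ne' hα.ne', Real.log_rpow hlf,
      Real.log_mul hη.ne' hwf.ne'] at hf
  have key : γl * (Real.log lm - Real.log lf) = X - (Real.log wm - Real.log wf) := by
    rw [hloglam] at hf; rw [hlog1lam] at hm; linarith
  field_simp
  linarith [key]
end

section
/- Under the first-order conditions (1-λ)·α_l·l_m^(-γ_l) = η·w_m and λ·α_l·l_f^(-γ_l) = η·w_f with λ the logistic bargaining weight λ = 1/(1 + exp(ρ₀ + ρ₁·x + ρ₂·𝟙{N₀>0})) where x = log w_m - log w_f, the leisure gap log l_m - log l_f is a strictly increasing function of x if and only if ρ₁ > 1. -/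
/-- The intra-household leisure gap is a strictly increasing function of the
log wage gap `x` if and only if the bargaining curvature `ρ₁` exceeds 1. -/
theorem stmt_2 (ρ0 ρ1 ρ2 γl αl : ℝ) (N0 : ℕ) (hγ : 0 < γl) (hα : 0 < αl)
    (wm wf lm lf η lam : ℝ → ℝ)
    (hwm : ∀ x, 0 < wm x) (hwf : ∀ x, 0 < wf x)
    (hx : ∀ x, Real.log (wm x) - Real.log (wf x) = x)
    (hlm : ∀ x, 0 < lm x) (hlf : ∀ x, 0 < lf x) (hη : ∀ x, 0 < η x)
    (hlam : ∀ x, lam x = 1 / (1 + Real.exp (ρ0 + ρ1 * x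
      + ρ2 * (if 0 < N0 then 1 else 0))))
    (foc_m : ∀ x, (1 - lam x) * αl * (lm x) ^ (-γl) = η x * wm x)
    (foc_f : ∀ x, lam x * αl * (lf x) ^ (-γl) = η x * wf x) :
    StrictMono (fun x => Real.log (lm x) - Real.log (lf x)) ↔ 1 < ρ1 := by
  set c : ℝ := ρ2 * (if 0 < N0 then 1 else 0) with hc
  have key : ∀ x, Real.log (lm x) - Real.log (lf x)
      = ((ρ1 - 1) * x + (ρ0 + c)) / γl := by
    intro x
    set E := Real.exp (ρ0 + ρ1 * x + c) with hE
    have hEpos : 0 < E := Real.exp_pos _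
    have h1E : (0:ℝ) < 1 + E := by linarith
    have hlamx : lam x = 1 / (1 + E) := hlam x
    have hlampos : 0 < lam x := by rw [hlamx]; positivity
    have h1lam : 1 - lam x = E / (1 + E) := by
      rw [hlamx]; field_simp; ring
    have h1lampos : 0 < 1 - lam x := by rw [h1lam]; positivity
    -- logs of the two FOCs
    have hm : Real.log (1 - lam x) + Real.log αl + (-γl) * Real.log (lm x)
        = Real.log (η x) + Real.log (wm x) := by
      rw [← Real.log_rpow (hlm x), ← Real.log_mul (by positivity)
        (by positivity), ← Real.log_mul (by positivity)
        (ne_of_gt (Real.rpow_pos_of_pos (hlm x) _)), foc_m x,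
        Real.log_mul (ne_of_gt (hη x)) (ne_of_gt (hwm x))]
    have hf : Real.log (lam x) + Real.log αl + (-γl) * Real.log (lf x)
        = Real.log (η x) + Real.log (wf x) := by
      rw [← Real.log_rpow (hlf x), ← Real.log_mul (by positivity)
        (by positivity), ← Real.log_mul (by positivity)
        (ne_of_gt (Real.rpow_pos_of_pos (hlf x) _)), foc_f x,
        Real.log_mul (ne_of_gt (hη x)) (ne_of_gt (hwf x))]
    -- log (1-λ) - log λ = log E
    have hratio : Real.log (1 - lam x) - Real.log (lam x) = ρ0 + ρ1 * x + c := by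
      have hEq : 1 - lam x = E * lam x := by
        rw [h1lam, hlamx]; ring
      rw [hEq, Real.log_mul (ne_of_gt hEpos) (ne_of_gt hlampos), hE,
        Real.log_exp]
      ring
    have hxeq := hx x
    have hγne : γl ≠ 0 := ne_of_gt hγ
    field_simp
    linarith [hm, hf, hratio, hxeq]
  constructor
  · intro h
    have h01 := h (show (0:ℝ) < 1 by norm_num)
    simp only [key] at h01
    have := (div_lt_div_iff_of_pos_right hγ).mp h01
    linarith
  · intro h a b hab
    simp only [key]
    rw [div_lt_div_iff_of_pos_right hγ]
    nlinarith
end
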